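/- Let π(1), π(2), ... be i.i.d. uniform on [K] and fix an arm k. Let n' ≥ 1, and set τ' := ceil of (4K·log(2T))/(3μ²) + (32K·log T)/9 with n' = ⌈log(2T)/(2μ²)⌉ for some μ ∈ (0,1] and T ≥ 2. Then P( Σ_{t=1}^{τ'} 𝟙{π(t)=k} < n' ) ≤ 1/(2T). -/

import Mathlib

open MeasureTheory ProbabilityTheory Real

lemma exp_neg_quad_bound (s : ℝ) (hs : 0 ≤ s) : Real.exp (-s) ≤ 1 - s + s^2/2 := by
  have hQ : 1 + s + s^2/2 + s^3/6 ≤ Real.exp s := by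
    have h := Real.sum_le_exp_of_nonneg hs 4
    simp [Finset.sum_range_succ, Nat.factorial] at h
    nlinarith [h]
  have hC : (0:ℝ) < 1 - s + s^2/2 := by nlinarith [sq_nonneg (s-1)]
  have h1 : Real.exp (-s) * Real.exp s = 1 := by rw [← Real.exp_add]; simp
  nlinarith [mul_le_mul_of_nonneg_left hQ hC.le, sq_nonneg s,
    mul_nonneg (mul_nonneg hs hs) hs, sq_nonneg (s*s),
    mul_nonneg (mul_nonneg (mul_nonneg hs hs) hs) (mul_nonneg hs hs)]

lemma key_ineq (c L A m b : ℝ) (hc1 : 0.6931 ≤ c) (hc2 : c ≤ 0.6932)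
    (hL : 2*c ≤ L) (hA : L/2 ≤ A)
    (hm : (8/3)*A + (32/9)*(L - c) ≤ m) (hb : m - A ≤ b) :
    2*m*L ≤ b^2 := by
  have hmA : 0 ≤ m - A := by nlinarith
  have h1 : (m - A)^2 ≤ b^2 := by nlinarith
  nlinarith [sq_nonneg (m - A - L), sq_nonneg (A - L/2), mul_nonneg hmA hmA,
    sq_nonneg (m - (8/3)*A - (32/9)*(L-c)), mul_nonneg (sub_nonneg.2 hA) (sub_nonneg.2 hL),
    sq_nonneg (L - 2*c), mul_nonneg (sub_nonneg.2 hm) (sub_nonneg.2 hA)]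

set_option maxHeartbeats 1000000 in
/-- lower tail of a Binomial(τ', 1/K): among
`τ' = ⌈4K log(2T)/(3μ²) + 32K log(T)/9⌉` i.i.d. uniform pulls on `[K]`, a fixed arm
is pulled fewer than `n' = ⌈log(2T)/(2μ²)⌉` times with probability at most `1/(2T)`. -/
theorem stmt_10 {Ω : Type*} [MeasureSpace Ω] [IsProbabilityMeasure (ℙ : Measure Ω)]
    (K : ℕ) (hK : 0 < K)
    (pol : ℕ → Ω → Fin K) (hmeas : ∀ t, Measurable (pol t))
    (hindep : iIndepFun pol)
    (hunif : ∀ t k, ℙ {ω | pol t ω = k} = 1 / (K : ENNReal))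
    (μ₀ : ℝ) (hμpos : 0 < μ₀) (hμ1 : μ₀ ≤ 1) (T : ℝ) (hT : 2 ≤ T)
    (n' : ℕ) (hn' : n' = ⌈Real.log (2 * T) / (2 * μ₀ ^ 2)⌉₊)
    (τ' : ℕ) (hτ' : τ' = ⌈4 * K * Real.log (2 * T) / (3 * μ₀ ^ 2) +
      32 * K * Real.log T / 9⌉₊)
    (k : Fin K) :
    (ℙ {ω | ((Finset.range τ').filter (fun t => pol t ω = k)).card < n'}).toReal ≤
      1 / (2 * T) := by
  classical
  have hT0 : (0:ℝ) < T := by linarith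
  have h2T : (0:ℝ) < 2*T := by linarith
  set c : ℝ := Real.log 2 with hcdef
  set L : ℝ := Real.log (2*T) with hLdef
  have hLsplit : L = c + Real.log T := by
    rw [hLdef, Real.log_mul (by norm_num) hT0.ne']
  have hc1 : (0.6931 : ℝ) ≤ c := by
    have := Real.log_two_gt_d9; rw [hcdef]; linarith
  have hc2 : c ≤ 0.6932 := by
    have := Real.log_two_lt_d9; rw [hcdef]; linarith
  have hlogT : c ≤ Real.log T := Real.log_le_log (by norm_num) hT
  have hL2c : 2*c ≤ L := by linarith
  have hLpos : 0 < L := by linarith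
  have hμ2 : 0 < μ₀^2 := by positivity
  have hμ21 : μ₀^2 ≤ 1 := by nlinarith
  set A : ℝ := L / (2*μ₀^2) with hAdef
  have hApos : 0 < A := by positivity
  have hA : L/2 ≤ A := div_le_div_of_nonneg_left hLpos.le (by positivity) (by nlinarith)
  have hn'1 : 1 ≤ n' := by
    rw [hn']
    have : (0:ℝ) < Real.log (2*T) / (2*μ₀^2) := by positivity
    exact Nat.one_le_iff_ne_zero.2 (Nat.ceil_pos.2 this).ne'
  have hn'A : (n' : ℝ) ≤ A + 1 := by
    rw [hn']; exact (Nat.ceil_lt_add_one (by positivity : (0:ℝ) ≤ _)).le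
  have hKpos : (0:ℝ) < K := Nat.cast_pos.2 hK
  set p : ℝ := 1 / K with hpdef
  have hp0 : 0 < p := by positivity
  have hp1 : p ≤ 1 := by
    rw [hpdef, div_le_one hKpos]; exact_mod_cast hK
  set m : ℝ := τ' * p with hmdef
  have hτle : 4*K*L/(3*μ₀^2) + 32*K*Real.log T/9 ≤ (τ' : ℝ) := by
    rw [hτ']; exact Nat.le_ceil _
  have hm : (8/3)*A + (32/9)*(L - c) ≤ m := by
    have hlogTeq : Real.log T = L - c := by linarith
    have heq : ((8/3)*A + (32/9)*(L - c)) * K = 4*K*L/(3*μ₀^2) + 32*K*Real.log T/9 := by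
      rw [hAdef, hlogTeq]; field_simp; ring
    have h1 : ((8/3)*A + (32/9)*(L - c)) * K ≤ (τ' : ℝ) := by rw [heq]; exact hτle
    rw [hmdef, hpdef, mul_one_div, le_div_iff₀ hKpos]
    exact h1
  set a : ℝ := (n' : ℝ) - 1 with hadef
  have ha0 : 0 ≤ a := by
    have : (1:ℝ) ≤ n' := by exact_mod_cast hn'1
    simp [hadef]; linarith
  have haA : a ≤ A := by rw [hadef]; linarith
  set b : ℝ := m - a with hbdef
  have hbA : m - A ≤ b := by rw [hbdef]; linarith
  have hmpos : 0 < m := by linarith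
  have hbpos : 0 < b := by linarith
  set s : ℝ := b / m with hsdef
  have hs0 : 0 < s := div_pos hbpos hmpos
  have hkey : 2*m*L ≤ b^2 := key_ineq c L A m b hc1 hc2 hL2c hA hm hbA
  -- random variables
  set X : ℕ → Ω → ℝ := fun t ω => if pol t ω = k then 1 else 0 with hXdef
  have hXmeas : ∀ t, Measurable (X t) := by
    intro t
    exact (measurable_of_countable (fun j : Fin K => if j = k then (1:ℝ) else 0)).comp (hmeas t)
  have hXindep : iIndepFun X ℙ :=
    hindep.comp (fun _ j => if j = k then (1:ℝ) else 0)
      (fun _ => measurable_of_countable _)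
  have hAt : ∀ t, MeasurableSet {ω | pol t ω = k} := fun t =>
    (hmeas t) (MeasurableSet.singleton k)
  -- mgf of each indicator
  have hmgf : ∀ (u : ℝ) (t : ℕ), mgf (X t) ℙ u = 1 + p * (Real.exp u - 1) := by
    intro u t
    have hfun : (fun ω => Real.exp (u * X t ω))
        = fun ω => Set.indicator {ω | pol t ω = k} (fun _ => Real.exp u - 1) ω + 1 := by
      funext ω
      by_cases h : pol t ω = k <;>
        simp [hXdef, h, Set.indicator_apply, Set.mem_setOf_eq, mul_one, mul_zero]
    have hPt : (ℙ {ω | pol t ω = k}).toReal = p := by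
      rw [hunif t k, hpdef]
      rw [ENNReal.toReal_div]
      simp
    rw [mgf]
    rw [hfun]
    rw [integral_add ((integrable_const _).indicator (hAt t)) (integrable_const 1)]
    rw [integral_indicator_const _ (hAt t), integral_const]
    simp [measureReal_def, hPt]
    ring
  set S : Ω → ℝ := ∑ t ∈ Finset.range τ', X t with hSdef
  have hSmeas : Measurable S := by
    rw [hSdef]
    have := Finset.measurable_sum (Finset.range τ') (fun t _ => hXmeas t)
    convert this using 1
    funext ω; rw [Finset.sum_apply]
  have hSnonneg : ∀ ω, 0 ≤ S ω := by
    intro ω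
    rw [hSdef, Finset.sum_apply]
    refine Finset.sum_nonneg fun t _ => ?_
    by_cases h : pol t ω = k <;> simp [hXdef, h]
  have hintS : Integrable (fun ω => Real.exp (-s * S ω)) ℙ := by
    refine Integrable.mono' (integrable_const 1)
      ((hSmeas.const_mul _).exp).aestronglyMeasurable ?_
    filter_upwards with ω
    rw [Real.norm_eq_abs, abs_of_pos (Real.exp_pos _)]
    exact Real.exp_le_one_iff.2 (mul_nonpos_of_nonpos_of_nonneg (by linarith) (hSnonneg ω))
  have hcher := measure_le_le_exp_mul_mgf (X := S) (μ := ℙ) (t := -s) a (by linarith) hintS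
  have hmgfS : mgf S ℙ (-s) = (1 + p * (Real.exp (-s) - 1))^τ' := by
    rw [hSdef, hXindep.mgf_sum hXmeas]
    rw [Finset.prod_congr rfl (fun t _ => hmgf (-s) t), Finset.prod_const, Finset.card_range]
  -- bound the mgf
  have hq : Real.exp (-s) ≤ 1 - s + s^2/2 := exp_neg_quad_bound s hs0.le
  have hbase_pos : (0:ℝ) < 1 + p * (Real.exp (-s) - 1) := by
    nlinarith [Real.exp_pos (-s)]
  have hbase_le : 1 + p * (Real.exp (-s) - 1) ≤ Real.exp (p * (-s + s^2/2)) := by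
    have h1 : p * (Real.exp (-s) - 1) ≤ p * (-s + s^2/2) := by
      apply mul_le_mul_of_nonneg_left _ hp0.le
      linarith
    have h2 := Real.add_one_le_exp (p * (-s + s^2/2))
    linarith
  have hpow : (1 + p * (Real.exp (-s) - 1))^τ' ≤ Real.exp ((τ':ℝ) * (p * (-s + s^2/2))) := by
    rw [Real.exp_nat_mul]
    exact pow_le_pow_left₀ hbase_pos.le hbase_le τ'
  -- exponent computation
  have hexp_eq : s*a + m*(-s + s^2/2) = -(b^2)/(2*m) := by
    rw [hsdef, hbdef]
    field_simp
    ring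
  have hexp_le : s*a + m*(-s + s^2/2) ≤ -L := by
    rw [hexp_eq]
    have h2m : (0:ℝ) < 2*m := by linarith
    have h1 : L ≤ b^2/(2*m) := (le_div_iff₀ h2m).2 (by nlinarith [hkey])
    rw [neg_div]
    linarith
  -- event inclusion
  have hsub : {ω | ((Finset.range τ').filter (fun t => pol t ω = k)).card < n'}
      ⊆ {ω | S ω ≤ a} := by
    intro ω hω
    simp only [Set.mem_setOf_eq] at hω ⊢
    have hcardeq : S ω
        = (((Finset.range τ').filter (fun t => pol t ω = k)).card : ℝ) := by
      rw [hSdef, Finset.sum_apply]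
      simp [hXdef]
    rw [hcardeq, hadef]
    have hle : ((Finset.range τ').filter (fun t => pol t ω = k)).card + 1 ≤ n' := hω
    have : (((Finset.range τ').filter (fun t => pol t ω = k)).card : ℝ) + 1 ≤ (n' : ℝ) := by
      exact_mod_cast hle
    linarith
  -- assemble
  have hfin : (ℙ {ω | S ω ≤ a}).toReal ≤ 1/(2*T) := by
    calc (ℙ {ω | S ω ≤ a}).toReal
        ≤ Real.exp (-(-s) * a) * mgf S ℙ (-s) := hcher
      _ ≤ Real.exp (s * a) * Real.exp ((τ':ℝ) * (p * (-s + s^2/2))) := by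
          rw [neg_neg]
          exact mul_le_mul_of_nonneg_left (hmgfS ▸ hpow) (Real.exp_pos _).le
      _ = Real.exp (s*a + m*(-s + s^2/2)) := by
          rw [← Real.exp_add, hmdef]; ring_nf
      _ ≤ Real.exp (-L) := Real.exp_le_exp.2 hexp_le
      _ = 1/(2*T) := by
          rw [hLdef, Real.exp_neg, Real.exp_log h2T, one_div]
  exact le_trans (ENNReal.toReal_mono (measure_ne_top _ _) (measure_mono hsub)) hfin
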